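/- Let φ and φ' be integer-valued σ-continuous valuations on compact convex subsets of ℝ^d that coincide on all singletons: φ({x}) = φ'({x}) for every x ∈ ℝ^d. Then φ = φ' on all compact convex sets. -/

import Mathlib

open Filter

private lemma sweep_lemma (d : ℕ) (ψ : Set (EuclideanSpace ℝ (Fin d)) → ℝ)
    (hint : ∀ K, ∃ m : ℤ, ψ K = m)
    (hadd : ∀ K L : Set (EuclideanSpace ℝ (Fin d)),
      IsCompact K → Convex ℝ K → IsCompact L → Convex ℝ L → Convex ℝ (K ∪ L) →
      ψ (K ∪ L) + ψ (K ∩ L) = ψ K + ψ L)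
    (hsc : ∀ (K : ℕ → Set (EuclideanSpace ℝ (Fin d))) (L : Set (EuclideanSpace ℝ (Fin d))),
      (∀ n, IsCompact (K n)) → (∀ n, Convex ℝ (K n)) → (∀ n, K (n + 1) ⊆ K n) →
      IsCompact L → Convex ℝ L → (⋂ n, K n) = L →
      Tendsto (fun n => ψ (K n)) atTop (nhds (ψ L)))
    (K : Set (EuclideanSpace ℝ (Fin d))) (hK : IsCompact K) (hKc : Convex ℝ K)
    (hKne : K.Nonempty) (j : Fin d)
    (hsec : ∀ t : ℝ, ψ (K ∩ {x | x j = t}) = 0) :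
    ψ K = 0 := by
  have hcont : Continuous fun x : EuclideanSpace ℝ (Fin d) => x j :=
    (EuclideanSpace.proj j).continuous
  have hlin : IsLinearMap ℝ (fun x : EuclideanSpace ℝ (Fin d) => x j) :=
    ⟨fun _ _ => rfl, fun _ _ => rfl⟩
  have hAcl : ∀ t : ℝ, IsClosed {x : EuclideanSpace ℝ (Fin d) | x j ≤ t} := fun t =>
    isClosed_le hcont continuous_const
  have hGecl : ∀ t : ℝ, IsClosed {x : EuclideanSpace ℝ (Fin d) | t ≤ x j} := fun t =>
    isClosed_le continuous_const hcont
  set A : ℝ → Set (EuclideanSpace ℝ (Fin d)) := fun t => K ∩ {x | x j ≤ t} with hA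
  have hAcomp : ∀ t, IsCompact (A t) := fun t => hK.inter_right (hAcl t)
  have hAconv : ∀ t, Convex ℝ (A t) := fun t => hKc.inter (convex_halfSpace_le hlin t)
  obtain ⟨p, hpK, hpmin⟩ := hK.exists_isMinOn hKne hcont.continuousOn
  obtain ⟨q, hqK, hqmax⟩ := hK.exists_isMaxOn hKne hcont.continuousOn
  set a := p j with ha
  set b := q j with hb
  have hab : a ≤ b := hpmin hqK
  -- key additivity identity
  have key : ∀ t u : ℝ, t ≤ u →
      ψ (A u) = ψ (A t) + ψ (K ∩ {x | x j ≤ u} ∩ {x | t ≤ x j}) := by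
    intro t u htu
    set B := K ∩ {x | x j ≤ u} ∩ {x | t ≤ x j} with hB
    have hBcomp : IsCompact B := (hK.inter_right (hAcl u)).inter_right (hGecl t)
    have hBconv : Convex ℝ B :=
      (hKc.inter (convex_halfSpace_le hlin u)).inter (convex_halfSpace_ge hlin t)
    have hunion : A t ∪ B = A u := by
      ext x
      simp only [hA, hB, Set.mem_union, Set.mem_inter_iff, Set.mem_setOf_eq]
      constructor
      · rintro (⟨hxK, hx⟩ | ⟨⟨hxK, hx⟩, _⟩)
        · exact ⟨hxK, le_trans hx htu⟩
        · exact ⟨hxK, hx⟩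
      · rintro ⟨hxK, hx⟩
        rcases le_total (x j) t with h | h
        · exact Or.inl ⟨hxK, h⟩
        · exact Or.inr ⟨⟨hxK, hx⟩, h⟩
    have hinter : A t ∩ B = K ∩ {x | x j = t} := by
      ext x
      simp only [hA, hB, Set.mem_inter_iff, Set.mem_setOf_eq]
      constructor
      · rintro ⟨⟨hxK, hx1⟩, ⟨_, _⟩, hx2⟩
        exact ⟨hxK, le_antisymm hx1 hx2⟩
      · rintro ⟨hxK, hx⟩
        exact ⟨⟨hxK, hx.le⟩, ⟨⟨hxK, hx.le.trans htu⟩, hx.ge⟩⟩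
    have h2 := hadd (A t) B (hAcomp t) (hAconv t) hBcomp hBconv
      (by rw [hunion]; exact hAconv u)
    rw [hunion, hinter, hsec t] at h2
    linarith
  have hAb : A b = K := Set.inter_eq_left.mpr (fun x hx => hqmax hx)
  have hga : ψ (A a) = 0 := by
    have hAa : A a = K ∩ {x | x j = a} := by
      ext x
      simp only [hA, Set.mem_inter_iff, Set.mem_setOf_eq]
      exact ⟨fun ⟨h1, h2⟩ => ⟨h1, le_antisymm h2 (hpmin h1)⟩, fun ⟨h1, h2⟩ => ⟨h1, h2.le⟩⟩
    rw [hAa]; exact hsec a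
  rw [← hAb]
  by_contra hb0
  set N : Set ℝ := {t | (a ≤ t ∧ t ≤ b) ∧ ψ (A t) ≠ 0} with hN
  have hbN : b ∈ N := ⟨⟨hab, le_refl b⟩, hb0⟩
  have hNne : N.Nonempty := ⟨b, hbN⟩
  have hNbdd : BddBelow N := ⟨a, fun t ht => ht.1.1⟩
  set s := sInf N with hs
  have has : a ≤ s := le_csInf hNne fun t ht => ht.1.1
  have hsb : s ≤ b := csInf_le hNbdd hbN
  have hbelow : ∀ t, a ≤ t → t < s → ψ (A t) = 0 := by
    intro t hat hts
    by_contra h0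
    exact absurd (csInf_le hNbdd ⟨⟨hat, hts.le.trans hsb⟩, h0⟩) (not_le.mpr hts)
  -- g s = 0 via left continuity along slabs
  have hseccomp : IsCompact (K ∩ {x | x j = s}) :=
    hK.inter_right (isClosed_eq hcont continuous_const)
  have hsecconv : Convex ℝ (K ∩ {x | x j = s}) := hKc.inter (convex_hyperplane hlin s)
  have hgs : ψ (A s) = 0 := by
    rcases eq_or_lt_of_le has with he | hlt
    · rw [← he]; exact hga
    · set t : ℕ → ℝ := fun n => s - (s - a) * (1/2)^n with ht
      have hsa : (0:ℝ) < s - a := sub_pos.mpr hlt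
      have htlt : ∀ n, t n < s := by
        intro n
        have : (0:ℝ) < (s - a) * (1/2)^n := by positivity
        simp only [ht]; linarith
      have htge : ∀ n, a ≤ t n := by
        intro n
        have h1 : ((1:ℝ)/2)^n ≤ 1 := pow_le_one₀ (by norm_num) (by norm_num)
        have h2 : (s - a) * (1/2)^n ≤ s - a := by nlinarith
        simp only [ht]; linarith
      have hmono : ∀ n, t n ≤ t (n+1) := by
        intro n
        have h1 : ((1:ℝ)/2)^(n+1) ≤ (1/2)^n := by
          apply pow_le_pow_of_le_one (by norm_num) (by norm_num) (Nat.le_succ n)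
        have h2 : (s - a) * (1/2)^(n+1) ≤ (s - a) * (1/2)^n := by nlinarith
        simp only [ht]; linarith
      set C : ℕ → Set (EuclideanSpace ℝ (Fin d)) :=
        fun n => K ∩ {x | x j ≤ s} ∩ {x | t n ≤ x j} with hC
      have hCcomp : ∀ n, IsCompact (C n) :=
        fun n => (hK.inter_right (hAcl s)).inter_right (hGecl (t n))
      have hCconv : ∀ n, Convex ℝ (C n) := fun n =>
        (hKc.inter (convex_halfSpace_le hlin s)).inter (convex_halfSpace_ge hlin (t n))
      have hCdec : ∀ n, C (n+1) ⊆ C n := fun n x hx => ⟨hx.1, le_trans (hmono n) hx.2⟩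
      have hCint : (⋂ n, C n) = K ∩ {x | x j = s} := by
        ext x
        simp only [hC, Set.mem_iInter, Set.mem_inter_iff, Set.mem_setOf_eq]
        constructor
        · intro h
          obtain ⟨⟨hxK, hxle⟩, -⟩ := h 0
          refine ⟨hxK, le_antisymm hxle ?_⟩
          by_contra hxs
          push_neg at hxs
          obtain ⟨n, hn⟩ := exists_pow_lt_of_lt_one
            (div_pos (sub_pos.mpr hxs) hsa) (by norm_num : (1:ℝ)/2 < 1)
          have h3 : (s - a) * (1/2)^n < s - x j := by
            rw [lt_div_iff₀ hsa] at hn; nlinarith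
          have h4 := (h n).2
          have h5 : t n = s - (s - a) * (1/2)^n := rfl
          rw [h5] at h4
          nlinarith
        · rintro ⟨hxK, hxs⟩
          exact fun n => ⟨⟨hxK, hxs.le⟩, by rw [hxs]; exact (htlt n).le⟩
      have hconst : ∀ n, ψ (C n) = ψ (A s) := by
        intro n
        have hk := key (t n) s (htlt n).le
        rw [hbelow (t n) (htge n) (htlt n)] at hk
        simp only [hC]
        linarith
      have hlim := hsc C (K ∩ {x | x j = s}) hCcomp hCconv hCdec hseccomp hsecconv hCint
      rw [hsec s] at hlim
      have heq : (fun n => ψ (C n)) = fun _ : ℕ => ψ (A s) := funext hconst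
      rw [heq] at hlim
      exact tendsto_nhds_unique tendsto_const_nhds hlim
  have hgsne : s ∉ N := fun h => h.2 hgs
  have hex : ∀ c : ℝ, s < c → ∃ x ∈ N, x < c := by
    intro c hc
    exact (csInf_lt_iff hNbdd hNne).mp hc
  have hx : ∀ n : ℕ, ∃ x ∈ N, x < s + 1/((n:ℝ)+1) := by
    intro n
    refine hex _ ?_
    have : (0:ℝ) < 1/((n:ℝ)+1) := by positivity
    linarith
  choose x hxN hxlt using hx
  have hsx : ∀ n, s < x n := by
    intro n
    rcases eq_or_lt_of_le (csInf_le hNbdd (hxN n)) with h | h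
    · exfalso; apply hgsne; rw [hs, h]; exact hxN n
    · exact h
  set y : ℕ → ℝ := fun n => (Finset.range (n+1)).inf' ⟨0, by simp⟩ x with hy
  have hyx : ∀ n, ∃ m ∈ Finset.range (n+1), y n = x m := by
    intro n
    obtain ⟨m, hm1, hm2⟩ := Finset.exists_mem_eq_inf' (⟨0, by simp⟩ :
      (Finset.range (n+1)).Nonempty) x
    exact ⟨m, hm1, hm2⟩
  have hyN : ∀ n, y n ∈ N := by
    intro n; obtain ⟨m, -, hm⟩ := hyx n; rw [hm]; exact hxN m
  have hys : ∀ n, s < y n := by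
    intro n; obtain ⟨m, -, hm⟩ := hyx n; rw [hm]; exact hsx m
  have hydec : ∀ n, y (n+1) ≤ y n := by
    intro n
    obtain ⟨m, hmr, hm⟩ := hyx n
    rw [hm]
    refine Finset.inf'_le x ?_
    simp only [Finset.mem_range] at hmr ⊢
    omega
  have hylt : ∀ n, y n < s + 1/((n:ℝ)+1) := by
    intro n
    exact lt_of_le_of_lt (Finset.inf'_le x (by simp)) (hxlt n)
  have hDint : (⋂ n, A (y n)) = A s := by
    ext z
    simp only [hA, Set.mem_iInter, Set.mem_inter_iff, Set.mem_setOf_eq]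
    constructor
    · intro h
      refine ⟨(h 0).1, ?_⟩
      by_contra hzs
      push_neg at hzs
      obtain ⟨n, hn⟩ := exists_nat_one_div_lt (sub_pos.mpr hzs)
      have h1 := (h n).2
      have h2 := hylt n
      linarith
    · rintro ⟨hzK, hzs⟩ n
      exact ⟨hzK, hzs.trans (hys n).le⟩
  have hlim := hsc (fun n => A (y n)) (A s) (fun n => hAcomp _) (fun n => hAconv _)
      (fun n z hz => ⟨hz.1, hz.2.trans (hydec n)⟩) (hAcomp s) (hAconv s) hDint
  rw [hgs] at hlim
  have hev : ∀ᶠ n in atTop, ψ (A (y n)) ∈ Set.Ioo (-1:ℝ) 1 :=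
    hlim (Ioo_mem_nhds (by norm_num) (by norm_num))
  obtain ⟨n, hn⟩ := hev.exists
  obtain ⟨m, hm⟩ := hint (A (y n))
  rw [hm] at hn
  have hm0 : m = 0 := by
    obtain ⟨h1, h2⟩ := hn
    have h1' : (-1:ℤ) < m := by exact_mod_cast h1
    have h2' : m < 1 := by exact_mod_cast h2
    omega
  exact (hyN n).2 (by rw [hm, hm0]; norm_num)

private lemma main_lemma (d : ℕ) (ψ : Set (EuclideanSpace ℝ (Fin d)) → ℝ)
    (hint : ∀ K, ∃ m : ℤ, ψ K = m)
    (hempty : ψ ∅ = 0)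
    (hadd : ∀ K L : Set (EuclideanSpace ℝ (Fin d)),
      IsCompact K → Convex ℝ K → IsCompact L → Convex ℝ L → Convex ℝ (K ∪ L) →
      ψ (K ∪ L) + ψ (K ∩ L) = ψ K + ψ L)
    (hsc : ∀ (K : ℕ → Set (EuclideanSpace ℝ (Fin d))) (L : Set (EuclideanSpace ℝ (Fin d))),
      (∀ n, IsCompact (K n)) → (∀ n, Convex ℝ (K n)) → (∀ n, K (n + 1) ⊆ K n) →
      IsCompact L → Convex ℝ L → (⋂ n, K n) = L →
      Tendsto (fun n => ψ (K n)) atTop (nhds (ψ L)))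
    (hsingle : ∀ x : EuclideanSpace ℝ (Fin d), ψ {x} = 0) :
    ∀ K : Set (EuclideanSpace ℝ (Fin d)), IsCompact K → Convex ℝ K → ψ K = 0 := by
  suffices h : ∀ n : ℕ, ∀ K : Set (EuclideanSpace ℝ (Fin d)), IsCompact K → Convex ℝ K →
      ∀ c : Fin d → ℝ, (∀ x ∈ K, ∀ i : Fin d, n ≤ (i : ℕ) → x i = c i) → ψ K = 0 by
    intro K hK hKc
    exact h d K hK hKc (fun _ => 0) (fun x _ i hi => absurd hi (not_le.mpr i.isLt))
  intro n
  induction n with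
  | zero =>
    intro K hK hKc c hc
    rcases K.eq_empty_or_nonempty with h | h
    · rw [h]; exact hempty
    · have hsub : K ⊆ {(WithLp.toLp 2 c : EuclideanSpace ℝ (Fin d))} := by
        intro x hx
        have : x = (WithLp.toLp 2 c : EuclideanSpace ℝ (Fin d)) :=
          PiLp.ext fun i => hc x hx i (Nat.zero_le _)
        simp [this]
      rcases Set.subset_singleton_iff_eq.mp hsub with h' | h'
      · exact absurd h' (Set.nonempty_iff_ne_empty.mp h)
      · rw [h']; exact hsingle _
  | succ n ih =>
    intro K hK hKc c hc
    by_cases hn : n < d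
    · set j : Fin d := ⟨n, hn⟩ with hj
      rcases K.eq_empty_or_nonempty with h | h
      · rw [h]; exact hempty
      refine sweep_lemma d ψ hint hadd hsc K hK hKc h j ?_
      intro t
      have hlin : IsLinearMap ℝ (fun x : EuclideanSpace ℝ (Fin d) => x j) :=
        ⟨fun _ _ => rfl, fun _ _ => rfl⟩
      refine ih (K ∩ {x | x j = t})
        (hK.inter_right (isClosed_eq (EuclideanSpace.proj j).continuous continuous_const))
        (hKc.inter (convex_hyperplane hlin t)) (Function.update c j t) ?_
      rintro x ⟨hxK, hxj⟩ i hi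
      by_cases hij : i = j
      · subst hij; rw [Function.update_self]; exact hxj
      · rw [Function.update_of_ne hij]
        refine hc x hxK i ?_
        have hne : (i : ℕ) ≠ n := fun h' => hij (Fin.ext h')
        omega
    · exact ih K hK hKc c fun x hx i hi => absurd hi (by have := i.isLt; omega)

/-- Two integer-valued σ-continuous valuations on compact convex subsets of ℝ^d that
coincide on all singletons coincide everywhere. -/
theorem valuations_eq_of_eq_on_singletons (d : ℕ)
    (φ φ' : Set (EuclideanSpace ℝ (Fin d)) → ℝ)
    (hint : ∀ K, ∃ m : ℤ, φ K = m) (hint' : ∀ K, ∃ m : ℤ, φ' K = m)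
    (hempty : φ ∅ = 0) (hempty' : φ' ∅ = 0)
    (hadd : ∀ K L : Set (EuclideanSpace ℝ (Fin d)),
      IsCompact K → Convex ℝ K → IsCompact L → Convex ℝ L → Convex ℝ (K ∪ L) →
      φ (K ∪ L) + φ (K ∩ L) = φ K + φ L)
    (hadd' : ∀ K L : Set (EuclideanSpace ℝ (Fin d)),
      IsCompact K → Convex ℝ K → IsCompact L → Convex ℝ L → Convex ℝ (K ∪ L) →
      φ' (K ∪ L) + φ' (K ∩ L) = φ' K + φ' L)
    (hsc : ∀ (K : ℕ → Set (EuclideanSpace ℝ (Fin d))) (L : Set (EuclideanSpace ℝ (Fin d))),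
      (∀ n, IsCompact (K n)) → (∀ n, Convex ℝ (K n)) → (∀ n, K (n + 1) ⊆ K n) →
      IsCompact L → Convex ℝ L → (⋂ n, K n) = L →
      Tendsto (fun n => φ (K n)) atTop (nhds (φ L)))
    (hsc' : ∀ (K : ℕ → Set (EuclideanSpace ℝ (Fin d))) (L : Set (EuclideanSpace ℝ (Fin d))),
      (∀ n, IsCompact (K n)) → (∀ n, Convex ℝ (K n)) → (∀ n, K (n + 1) ⊆ K n) →
      IsCompact L → Convex ℝ L → (⋂ n, K n) = L →
      Tendsto (fun n => φ' (K n)) atTop (nhds (φ' L)))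
    (hsingle : ∀ x : EuclideanSpace ℝ (Fin d), φ {x} = φ' {x}) :
    ∀ K : Set (EuclideanSpace ℝ (Fin d)), IsCompact K → Convex ℝ K → φ K = φ' K := by
  intro K hK hKc
  have h := main_lemma d (fun K => φ K - φ' K)
    (fun K => by
      obtain ⟨m, hm⟩ := hint K
      obtain ⟨m', hm'⟩ := hint' K
      exact ⟨m - m', by push_cast; rw [hm, hm']⟩)
    (by simp [hempty, hempty'])
    (fun A B hA hAc hB hBc hU => by
      have h1 := hadd A B hA hAc hB hBc hU
      have h2 := hadd' A B hA hAc hB hBc hU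
      linarith)
    (fun Kn L h1 h2 h3 h4 h5 h6 =>
      (hsc Kn L h1 h2 h3 h4 h5 h6).sub (hsc' Kn L h1 h2 h3 h4 h5 h6))
    (fun x => by show φ {x} - φ' {x} = 0; rw [hsingle x]; ring)
    K hK hKc
  linarith
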